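/- For every t ∈ [0, 1+h) and every r ∈ (0, 1+h−t], the semigroup (time-homogeneous Markov) property holds: H_t(x) = ∫_ℝ H_{t+r}(z)·q^c(t, x; t+r, z) dz for all x ∈ ℝ. -/

import Mathlib

open MeasureTheory Filter Real Set

noncomputable section

namespace LAB

/-- The loss-averse utility index built from `σlo ≤ σhi`, reference point `c`
and a function `φ₁` on the gain domain (`θ = σlo/σhi`). -/
def lossUtility (σlo σhi c : ℝ) (φ₁ : ℝ → ℝ) : ℝ → ℝ := fun x =>
  if c ≤ x then φ₁ (x - c) else -(σhi / σlo) * φ₁ (-(σlo / σhi) * (x - c))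

/-- `φ₁` is bounded with bounded continuous derivatives up to order three on `[0,∞)`. -/
def Cb3 (φ₁ : ℝ → ℝ) : Prop :=
  ContDiffOn ℝ 3 φ₁ (Set.Ici 0) ∧
  ∀ k : ℕ, k ≤ 3 → ∃ C : ℝ, ∀ x ∈ Set.Ici (0 : ℝ),
    |iteratedDerivWithin k φ₁ (Set.Ici 0) x| ≤ C

/-- The density of the time-1 value of the oscillating Brownian motion with
parameters `σlo`, `σhi` and threshold `c`. -/
def oscDensity (σlo σhi c : ℝ) : ℝ → ℝ := fun y =>
  if 0 ≤ c then
    if c ≤ y then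
      (2 * σhi / ((σhi + σlo) * σlo * Real.sqrt (2 * Real.pi))) *
        Real.exp (-(c / σhi + (y - c) / σlo) ^ 2 / 2)
    else
      (1 / (σhi * Real.sqrt (2 * Real.pi))) *
        (Real.exp (-(y ^ 2) / (2 * σhi ^ 2)) -
          ((σhi - σlo) / (σhi + σlo)) * Real.exp (-((2 * c - y) ^ 2) / (2 * σhi ^ 2)))
  else
    if c ≤ y then
      (1 / (σlo * Real.sqrt (2 * Real.pi))) *
        (Real.exp (-(y ^ 2) / (2 * σlo ^ 2)) +
          ((σhi - σlo) / (σhi + σlo)) * Real.exp (-((y - 2 * c) ^ 2) / (2 * σlo ^ 2)))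
    else
      (1 / (σhi * Real.sqrt (2 * Real.pi))) *
        (Real.exp (-(y ^ 2) / (2 * σhi ^ 2)) -
          ((σhi - σlo) / (σhi + σlo)) * Real.exp (-((2 * c - y) ^ 2) / (2 * σhi ^ 2)))

/-- The two-valued diffusion coefficient: `σ̲` on `[c,∞)`, `σ̄` on `(−∞,c)`. -/
def sigmaStep (σlo σhi c : ℝ) : ℝ → ℝ := fun y => if c ≤ y then σlo else σhi

/-- The transition probability density `q^c(t,x;s,y)` of the oscillating
Brownian motion with diffusion coefficient `sigmaStep σlo σhi c`. -/
def transDensity (σlo σhi c t x s y : ℝ) : ℝ :=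
  (1 / (Real.sqrt (2 * Real.pi * (s - t)) * sigmaStep σlo σhi c y)) *
      Real.exp (-((x - c) / sigmaStep σlo σhi c x - (y - c) / sigmaStep σlo σhi c y) ^ 2 /
        (2 * (s - t)))
    + ((σhi - σlo) / (σhi + σlo)) *
      (Real.sign (y - c) / (Real.sqrt (2 * Real.pi * (s - t)) * sigmaStep σlo σhi c y)) *
      Real.exp (-(|(x - c) / sigmaStep σlo σhi c x| + |(y - c) / sigmaStep σlo σhi c y|) ^ 2 /
        (2 * (s - t)))

/-- The function `H_t(x) = E[φ(Y_{1+h}^{t,x,c})]`, expressed through the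
transition density of the oscillating Brownian motion; `H_{1+h} = φ`. -/
def Hfun (σlo σhi c : ℝ) (φ₁ : ℝ → ℝ) (h t : ℝ) : ℝ → ℝ := fun x =>
  if t < 1 + h then
    ∫ y, lossUtility σlo σhi c φ₁ y * transDensity σlo σhi c t x (1 + h) y
  else lossUtility σlo σhi c φ₁ x


/-- Gaussian kernel. -/
def gk (τ u : ℝ) : ℝ := Real.exp (-u ^ 2 / (2 * τ)) / Real.sqrt (2 * Real.pi * τ)

lemma gk_neg (τ u : ℝ) : gk τ (-u) = gk τ u := by simp [gk]

lemma gk_nonneg {τ : ℝ} (u : ℝ) : 0 ≤ gk τ u :=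
  div_nonneg (Real.exp_nonneg _) (Real.sqrt_nonneg _)

lemma two_pi_tau_pos {τ : ℝ} (hτ : 0 < τ) : 0 < 2 * Real.pi * τ := by positivity

lemma gk_mono {τ : ℝ} (hτ : 0 < τ) {u v : ℝ} (h : |u| ≤ |v|) : gk τ v ≤ gk τ u := by
  have h2 : u ^ 2 ≤ v ^ 2 := by
    rw [← sq_abs u, ← sq_abs v]
    exact pow_le_pow_left₀ (abs_nonneg u) h 2
  unfold gk
  gcongr

lemma gk_eq_exp {τ : ℝ} (hτ : 0 < τ) :
    gk τ = fun u => Real.exp (-(2*τ)⁻¹ * u ^ 2) / Real.sqrt (2 * Real.pi * τ) := by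
  funext u
  unfold gk
  congr 1
  ring_nf

lemma gk_integrable {τ : ℝ} (hτ : 0 < τ) : Integrable (gk τ) := by
  rw [gk_eq_exp hτ]
  exact (integrable_exp_neg_mul_sq (by positivity)).div_const _

lemma integral_gk {τ : ℝ} (hτ : 0 < τ) : ∫ u, gk τ u = 1 := by
  rw [gk_eq_exp hτ]
  rw [integral_div, integral_gaussian]
  rw [show Real.pi / (2*τ)⁻¹ = 2 * Real.pi * τ by field_simp]
  exact div_self (ne_of_gt (Real.sqrt_pos.2 (two_pi_tau_pos hτ)))

lemma gk_continuous (τ : ℝ) : Continuous (gk τ) := by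
  unfold gk
  fun_prop

/-- shifted Gaussian is integrable -/
lemma gk_integrable_sub {τ : ℝ} (hτ : 0 < τ) (a : ℝ) :
    Integrable (fun z => gk τ (z - a)) :=
  (gk_integrable hτ).comp_sub_right a

lemma integral_gk_sub {τ : ℝ} (hτ : 0 < τ) (a : ℝ) : ∫ z, gk τ (z - a) = 1 := by
  rw [integral_sub_right_eq_self (gk τ) a]; exact integral_gk hτ

lemma gk_integrable_sub' {τ : ℝ} (hτ : 0 < τ) (a : ℝ) :
    Integrable (fun z => gk τ (a - z)) := by
  have : (fun z => gk τ (a - z)) = fun z => gk τ (z - a) := by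
    funext z; rw [← gk_neg τ (z - a)]; ring_nf
  rw [this]; exact gk_integrable_sub hτ a

lemma integral_gk_sub' {τ : ℝ} (hτ : 0 < τ) (a : ℝ) : ∫ z, gk τ (a - z) = 1 := by
  have : (fun z => gk τ (a - z)) = fun z => gk τ (z - a) := by
    funext z; rw [← gk_neg τ (z - a)]; ring_nf
  rw [this]; exact integral_gk_sub hτ a

section Conv
variable {t1 t2 : ℝ}

/-- Pointwise Gaussian product factorization (completing the square). -/
lemma gk_mul_gk (h1 : 0 < t1) (h2 : 0 < t2) (w v z : ℝ) :
    gk t1 (w - z) * gk t2 (z - v) =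
      gk (t1 + t2) (w - v) *
        gk (t1 * t2 / (t1 + t2)) (z - (t2 * w + t1 * v) / (t1 + t2)) := by
  have ht : (0:ℝ) < t1 + t2 := by linarith
  unfold gk
  rw [div_mul_div_comm, div_mul_div_comm, ← Real.exp_add, ← Real.exp_add]
  congr 1
  · congr 1
    field_simp
    ring
  · rw [← Real.sqrt_mul (two_pi_tau_pos h1).le, ← Real.sqrt_mul (two_pi_tau_pos ht).le]
    congr 1
    field_simp

lemma integrable_gk_mul_gk (h1 : 0 < t1) (h2 : 0 < t2) (w v : ℝ) :
    Integrable (fun z => gk t1 (w - z) * gk t2 (z - v)) := by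
  have ht : (0:ℝ) < t1 + t2 := by linarith
  have ht' : (0:ℝ) < t1 * t2 / (t1 + t2) := by positivity
  simp_rw [gk_mul_gk h1 h2 w v]
  exact (gk_integrable_sub ht' _).const_mul _

lemma integral_gk_mul_gk (h1 : 0 < t1) (h2 : 0 < t2) (w v : ℝ) :
    ∫ z, gk t1 (w - z) * gk t2 (z - v) = gk (t1 + t2) (w - v) := by
  have ht : (0:ℝ) < t1 + t2 := by linarith
  have ht' : (0:ℝ) < t1 * t2 / (t1 + t2) := by positivity
  simp_rw [gk_mul_gk h1 h2 w v]
  rw [integral_const_mul, integral_gk_sub ht', mul_one]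

end Conv

/-- skew-BM type transition kernel in straightened coordinates -/
def pk (β τ X Y : ℝ) : ℝ := gk τ (X - Y) + β * Real.sign Y * gk τ (|X| + |Y|)

lemma measurable_realSign : Measurable Real.sign := by
  unfold Real.sign
  exact Measurable.ite measurableSet_Iio measurable_const
    (Measurable.ite measurableSet_Ioi measurable_const measurable_const)

lemma abs_realSign (y : ℝ) : |Real.sign y| ≤ 1 := by
  rcases Real.sign_apply_eq y with h | h | h <;> rw [h] <;> norm_num

lemma pk_abs_le {β τ : ℝ} (hβ : |β| ≤ 1) (hτ : 0 < τ) (X Y : ℝ) :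
    |pk β τ X Y| ≤ 2 * gk τ (X - Y) := by
  have h1 : gk τ (|X| + |Y|) ≤ gk τ (X - Y) := by
    apply gk_mono hτ
    rw [abs_of_nonneg (by positivity : (0:ℝ) ≤ |X| + |Y|)]
    exact abs_sub X Y
  have h2 : |β * Real.sign Y * gk τ (|X| + |Y|)| ≤ gk τ (X - Y) := by
    rw [abs_mul, abs_mul, abs_of_nonneg (gk_nonneg _)]
    calc |β| * |Real.sign Y| * gk τ (|X| + |Y|) ≤ 1 * 1 * gk τ (X - Y) := by
          apply mul_le_mul (mul_le_mul hβ (abs_realSign Y) (abs_nonneg _) (by norm_num))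
            h1 (gk_nonneg _) (by norm_num)
      _ = gk τ (X - Y) := by ring
  calc |pk β τ X Y| ≤ |gk τ (X - Y)| + |β * Real.sign Y * gk τ (|X| + |Y|)| := abs_add_le _ _
    _ ≤ gk τ (X - Y) + gk τ (X - Y) := by
        rw [abs_of_nonneg (gk_nonneg _)]; linarith
    _ = 2 * gk τ (X - Y) := by ring

lemma pk_cont_left (β τ Y : ℝ) : Continuous fun X => pk β τ X Y := by
  unfold pk gk
  fun_prop

lemma pk_meas_right (β τ X : ℝ) : Measurable fun Y => pk β τ X Y := by
  unfold pk
  apply Measurable.add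
  · exact ((gk_continuous τ).measurable).comp (measurable_const.sub measurable_id)
  · exact (measurable_realSign.const_mul β).mul
      (((gk_continuous τ).measurable).comp (measurable_abs.const_add |X|))

lemma pk_integrable {β τ : ℝ} (hβ : |β| ≤ 1) (hτ : 0 < τ) (X : ℝ) :
    Integrable (fun Y => pk β τ X Y) := by
  apply Integrable.mono' ((gk_integrable_sub' hτ X).const_mul 2)
    (pk_meas_right β τ X).aestronglyMeasurable
  exact Eventually.of_forall fun Y => pk_abs_le hβ hτ X Y

lemma integral_abs_pk_le {β τ : ℝ} (hβ : |β| ≤ 1) (hτ : 0 < τ) (X : ℝ) :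
    ∫ Y, |pk β τ X Y| ≤ 2 := by
  calc ∫ Y, |pk β τ X Y| ≤ ∫ Y, 2 * gk τ (X - Y) := by
        apply integral_mono (pk_integrable hβ hτ X).abs
          ((gk_integrable_sub' hτ X).const_mul 2)
        exact fun Y => pk_abs_le hβ hτ X Y
    _ = 2 := by rw [integral_const_mul, integral_gk_sub' hτ X, mul_one]

lemma odd_integral {f : ℝ → ℝ} (hf : ∀ z, f (-z) = - f z) : ∫ z, f z = 0 := by
  have h1 : ∫ z, f (-z) = ∫ z, f z := integral_neg_eq_self f volume
  have h2 : ∫ z, f (-z) = ∫ z, -f z := by simp_rw [hf]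
  rw [integral_neg] at h2
  linarith

lemma odd_of_nonneg {f : ℝ → ℝ} (h : ∀ z, 0 ≤ z → f (-z) = - f z) :
    ∀ z, f (-z) = - f z := by
  intro z
  rcases le_or_gt 0 z with hz | hz
  · exact h z hz
  · have := h (-z) (by linarith)
    rw [neg_neg] at this
    linarith

section CK
variable {β t1 t2 : ℝ}

lemma ck_case (hβ : |β| ≤ 1) (h1 : 0 < t1) (h2 : 0 < t2) (X Y v : ℝ)
    (hodd : ∀ Z : ℝ,
      pk β t1 X (-Z) * pk β t2 (-Z) Y - gk t1 (X - -Z) * gk t2 (-Z - Y)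
          - β * Real.sign Y * (gk t1 (X - -Z) * gk t2 (-Z - v)) =
        -(pk β t1 X Z * pk β t2 Z Y - gk t1 (X - Z) * gk t2 (Z - Y)
          - β * Real.sign Y * (gk t1 (X - Z) * gk t2 (Z - v))))
    (hval : Real.sign Y * gk (t1 + t2) (X - v) = Real.sign Y * gk (t1 + t2) (|X| + |Y|)) :
    ∫ Z, pk β t1 X Z * pk β t2 Z Y = pk β (t1 + t2) X Y := by
  have hint1 := integrable_gk_mul_gk h1 h2 X Y
  have hint2 := integrable_gk_mul_gk h1 h2 X v
  have hpp : Integrable (fun Z => pk β t1 X Z * pk β t2 Z Y) := by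
    apply Integrable.mono' ((hint1.const_mul 4))
    · exact ((pk_meas_right β t1 X).mul
        (pk_cont_left β t2 Y).measurable).aestronglyMeasurable
    · apply Eventually.of_forall
      intro Z
      rw [Real.norm_eq_abs, abs_mul]
      calc |pk β t1 X Z| * |pk β t2 Z Y|
          ≤ (2 * gk t1 (X - Z)) * (2 * gk t2 (Z - Y)) :=
            mul_le_mul (pk_abs_le hβ h1 X Z) (pk_abs_le hβ h2 Z Y) (abs_nonneg _)
              (mul_nonneg (by norm_num) (gk_nonneg _))
        _ = 4 * (gk t1 (X - Z) * gk t2 (Z - Y)) := by ring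
  have hG2 : Integrable (fun Z => β * Real.sign Y * (gk t1 (X - Z) * gk t2 (Z - v))) :=
    hint2.const_mul _
  have hF : Integrable (fun Z => pk β t1 X Z * pk β t2 Z Y
      - gk t1 (X - Z) * gk t2 (Z - Y)
      - β * Real.sign Y * (gk t1 (X - Z) * gk t2 (Z - v))) :=
    (hpp.sub hint1).sub hG2
  have hFz : (∫ Z, (pk β t1 X Z * pk β t2 Z Y - gk t1 (X - Z) * gk t2 (Z - Y)
      - β * Real.sign Y * (gk t1 (X - Z) * gk t2 (Z - v)))) = 0 :=
    odd_integral hodd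
  have key : (fun Z => pk β t1 X Z * pk β t2 Z Y) = fun Z =>
      (gk t1 (X - Z) * gk t2 (Z - Y) + β * Real.sign Y * (gk t1 (X - Z) * gk t2 (Z - v)))
      + (pk β t1 X Z * pk β t2 Z Y - gk t1 (X - Z) * gk t2 (Z - Y)
        - β * Real.sign Y * (gk t1 (X - Z) * gk t2 (Z - v))) := by
    funext Z; ring
  have hsum : Integrable (fun Z => gk t1 (X - Z) * gk t2 (Z - Y)
      + β * Real.sign Y * (gk t1 (X - Z) * gk t2 (Z - v))) := hint1.add hG2
  rw [key, integral_add hsum hF, integral_add hint1 hG2, hFz, add_zero,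
    integral_const_mul, integral_gk_mul_gk h1 h2 X Y, integral_gk_mul_gk h1 h2 X v]
  unfold pk
  rw [mul_assoc, hval, ← mul_assoc]

end CK

def ckF (β t1 t2 X Y v : ℝ) (Z : ℝ) : ℝ :=
  pk β t1 X Z * pk β t2 Z Y - gk t1 (X - Z) * gk t2 (Z - Y)
    - β * Real.sign Y * (gk t1 (X - Z) * gk t2 (Z - v))

lemma ck_odd {β t1 t2 X Y v : ℝ}
    (h : ∀ Z, 0 ≤ Z → ckF β t1 t2 X Y v (-Z) = - ckF β t1 t2 X Y v Z) :
    ∀ Z : ℝ,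
      pk β t1 X (-Z) * pk β t2 (-Z) Y - gk t1 (X - -Z) * gk t2 (-Z - Y)
          - β * Real.sign Y * (gk t1 (X - -Z) * gk t2 (-Z - v)) =
        -(pk β t1 X Z * pk β t2 Z Y - gk t1 (X - Z) * gk t2 (Z - Y)
          - β * Real.sign Y * (gk t1 (X - Z) * gk t2 (Z - v))) := fun Z => by
  have := odd_of_nonneg (f := ckF β t1 t2 X Y v) h Z
  simpa [ckF] using this

lemma pk_CK {β t1 t2 : ℝ} (hβ : |β| ≤ 1) (h1 : 0 < t1) (h2 : 0 < t2) (X Y : ℝ) :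
    ∫ Z, pk β t1 X Z * pk β t2 Z Y = pk β (t1 + t2) X Y := by
  rcases lt_trichotomy Y 0 with hY | hY | hY
  · rcases le_or_gt 0 X with hX | hX
    · -- Y < 0, 0 ≤ X, v = Y
      apply ck_case hβ h1 h2 X Y Y (ck_odd ?_) ?_
      · intro Z hZ
        rcases eq_or_lt_of_le hZ with hZ0 | hZ0
        · rw [← hZ0]
          simp only [ckF, pk, neg_zero, Real.sign_zero, Real.sign_of_neg hY, abs_zero,
            abs_of_nonneg hX, abs_of_neg hY, gk]
          ring_nf
        · simp only [ckF, pk, Real.sign_neg, Real.sign_of_pos hZ0, Real.sign_of_neg hY,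
            abs_neg, abs_of_nonneg hZ, abs_of_nonneg hX, abs_of_neg hY, gk]
          ring_nf
      · rw [abs_of_nonneg hX, abs_of_neg hY, show X + -Y = X - Y by ring]
    · -- Y < 0, X < 0, v = -Y
      apply ck_case hβ h1 h2 X Y (-Y) (ck_odd ?_) ?_
      · intro Z hZ
        rcases eq_or_lt_of_le hZ with hZ0 | hZ0
        · rw [← hZ0]
          simp only [ckF, pk, neg_zero, Real.sign_zero, Real.sign_of_neg hY, abs_zero,
            abs_of_neg hX, abs_of_neg hY, gk]
          ring_nf
        · simp only [ckF, pk, Real.sign_neg, Real.sign_of_pos hZ0, Real.sign_of_neg hY,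
            abs_neg, abs_of_nonneg hZ, abs_of_neg hX, abs_of_neg hY, gk]
          ring_nf
      · rw [abs_of_neg hX, abs_of_neg hY, show -X + -Y = -(X - -Y) by ring, gk_neg]
  · -- Y = 0, v = 0
    subst hY
    apply ck_case hβ h1 h2 X 0 0 (ck_odd ?_) ?_
    · intro Z hZ
      rcases eq_or_lt_of_le hZ with hZ0 | hZ0
      · rw [← hZ0]
        simp only [ckF, pk, neg_zero, Real.sign_zero, abs_zero, gk]
        ring_nf
      · rcases le_or_gt 0 X with hX | hX
        · simp only [ckF, pk, Real.sign_neg, Real.sign_of_pos hZ0, Real.sign_zero,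
            abs_neg, abs_of_nonneg hZ, abs_of_nonneg hX, abs_zero, gk]
          ring_nf
        · simp only [ckF, pk, Real.sign_neg, Real.sign_of_pos hZ0, Real.sign_zero,
            abs_neg, abs_of_nonneg hZ, abs_of_neg hX, abs_zero, gk]
          ring_nf
    · simp [Real.sign_zero]
  · rcases le_or_gt 0 X with hX | hX
    · -- Y > 0, 0 ≤ X, v = -Y
      apply ck_case hβ h1 h2 X Y (-Y) (ck_odd ?_) ?_
      · intro Z hZ
        rcases eq_or_lt_of_le hZ with hZ0 | hZ0
        · rw [← hZ0]
          simp only [ckF, pk, neg_zero, Real.sign_zero, Real.sign_of_pos hY, abs_zero,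
            abs_of_nonneg hX, abs_of_pos hY, gk]
          ring_nf
        · simp only [ckF, pk, Real.sign_neg, Real.sign_of_pos hZ0, Real.sign_of_pos hY,
            abs_neg, abs_of_nonneg hZ, abs_of_nonneg hX, abs_of_pos hY, gk]
          ring_nf
      · rw [abs_of_nonneg hX, abs_of_pos hY, show X - -Y = X + Y by ring]
    · -- Y > 0, X < 0, v = Y
      apply ck_case hβ h1 h2 X Y Y (ck_odd ?_) ?_
      · intro Z hZ
        rcases eq_or_lt_of_le hZ with hZ0 | hZ0
        · rw [← hZ0]
          simp only [ckF, pk, neg_zero, Real.sign_zero, Real.sign_of_pos hY, abs_zero,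
            abs_of_neg hX, abs_of_pos hY, gk]
          ring_nf
        · simp only [ckF, pk, Real.sign_neg, Real.sign_of_pos hZ0, Real.sign_of_pos hY,
            abs_neg, abs_of_nonneg hZ, abs_of_neg hX, abs_of_pos hY, gk]
          ring_nf
      · rw [abs_of_neg hX, abs_of_pos hY, show -X + Y = -(X - Y) by ring, gk_neg]

/-! ### Change of variables between the oscillating and skew coordinates -/

def sigmaStep' (σlo σhi c : ℝ) : ℝ → ℝ := fun y => if c ≤ y then σlo else σhi

def Tmap (σlo σhi c z : ℝ) : ℝ := (z - c) / sigmaStep' σlo σhi c z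

def Smap (σlo σhi c u : ℝ) : ℝ := c + (if 0 ≤ u then σlo else σhi) * u

section COV
variable {σlo σhi c : ℝ}

lemma sigmaStep'_pos (hσlo : 0 < σlo) (hσ : σlo ≤ σhi) (z : ℝ) :
    0 < sigmaStep' σlo σhi c z := by
  unfold sigmaStep'; split <;> linarith

lemma Smap_Tmap (hσlo : 0 < σlo) (hσ : σlo ≤ σhi) (z : ℝ) :
    Smap σlo σhi c (Tmap σlo σhi c z) = z := by
  have hhi : 0 < σhi := lt_of_lt_of_le hσlo hσ
  unfold Smap Tmap sigmaStep'
  by_cases hz : c ≤ z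
  · rw [if_pos hz, if_pos (div_nonneg (by linarith) hσlo.le)]
    field_simp
    ring
  · push_neg at hz
    rw [if_neg (not_le.2 hz), if_neg (by
      simp only [not_le]
      exact div_neg_of_neg_of_pos (by linarith) hhi)]
    field_simp
    ring

lemma cov_pt (hσlo : 0 < σlo) (hσ : σlo ≤ σhi) (f : ℝ → ℝ) (z : ℝ) :
    f (Tmap σlo σhi c z) / sigmaStep' σlo σhi c z =
      (Set.indicator (Set.Ici 0) f) ((z - c) * σlo⁻¹) * σlo⁻¹ +
      (Set.indicator (Set.Iio 0) f) ((z - c) * σhi⁻¹) * σhi⁻¹ := by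
  have hhi : 0 < σhi := lt_of_lt_of_le hσlo hσ
  unfold Tmap sigmaStep'
  by_cases hz : c ≤ z
  · have h1 : (0:ℝ) ≤ (z - c) * σlo⁻¹ := mul_nonneg (by linarith) (by positivity)
    have h2 : ¬ ((z - c) * σhi⁻¹ < 0) := not_lt.2 (mul_nonneg (by linarith) (by positivity))
    simp only [if_pos hz, Set.indicator_apply, Set.mem_Ici, Set.mem_Iio, if_pos h1, if_neg h2,
      div_eq_mul_inv, zero_mul, add_zero]
  · push_neg at hz
    have h1 : ¬ ((0:ℝ) ≤ (z - c) * σlo⁻¹) := by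
      simp only [not_le]
      exact mul_neg_of_neg_of_pos (by linarith) (by positivity)
    have h2 : (z - c) * σhi⁻¹ < 0 := mul_neg_of_neg_of_pos (by linarith) (by positivity)
    simp only [if_neg (not_le.2 hz), Set.indicator_apply, Set.mem_Ici, Set.mem_Iio, if_neg h1,
      if_pos h2, div_eq_mul_inv, zero_mul, zero_add]

lemma indicator_split (f : ℝ → ℝ) (u : ℝ) :
    (Set.indicator (Set.Ici 0) f) u + (Set.indicator (Set.Iio 0) f) u = f u := by
  by_cases hu : (0:ℝ) ≤ u
  · simp [Set.indicator_apply, hu, not_lt.2 hu]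
  · simp [Set.indicator_apply, hu, lt_of_not_ge hu]

lemma cov_integrable (hσlo : 0 < σlo) (hσ : σlo ≤ σhi) {f : ℝ → ℝ} (hf : Integrable f) :
    Integrable (fun z => f (Tmap σlo σhi c z) / sigmaStep' σlo σhi c z) := by
  have hhi : 0 < σhi := lt_of_lt_of_le hσlo hσ
  have e := cov_pt (c := c) hσlo hσ f
  simp_rw [e]
  apply Integrable.add
  · exact (((hf.indicator measurableSet_Ici).comp_mul_right'
      (inv_ne_zero hσlo.ne')).comp_sub_right c).mul_const _
  · exact (((hf.indicator measurableSet_Iio).comp_mul_right'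
      (inv_ne_zero hhi.ne')).comp_sub_right c).mul_const _

lemma cov_piece {σ : ℝ} (hσpos : 0 < σ) (g : ℝ → ℝ) :
    ∫ z, g ((z - c) * σ⁻¹) * σ⁻¹ = ∫ u, g u := by
  rw [MeasureTheory.integral_mul_const]
  have h1 : ∫ z, g ((z - c) * σ⁻¹) = ∫ u, g (u * σ⁻¹) := by
    exact integral_sub_right_eq_self (fun u => g (u * σ⁻¹)) c
  rw [h1, MeasureTheory.Measure.integral_comp_mul_right g σ⁻¹, inv_inv,
    abs_of_pos hσpos, smul_eq_mul]
  field_simp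

lemma cov_integral (hσlo : 0 < σlo) (hσ : σlo ≤ σhi) {f : ℝ → ℝ} (hf : Integrable f) :
    ∫ z, f (Tmap σlo σhi c z) / sigmaStep' σlo σhi c z = ∫ u, f u := by
  have hhi : 0 < σhi := lt_of_lt_of_le hσlo hσ
  have e := cov_pt (c := c) hσlo hσ f
  simp_rw [e]
  rw [integral_add
    ((((hf.indicator measurableSet_Ici).comp_mul_right'
      (inv_ne_zero hσlo.ne')).comp_sub_right c).mul_const _)
    ((((hf.indicator measurableSet_Iio).comp_mul_right'
      (inv_ne_zero hhi.ne')).comp_sub_right c).mul_const _),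
    cov_piece hσlo, cov_piece hhi]
  rw [← integral_add (hf.indicator measurableSet_Ici) (hf.indicator measurableSet_Iio)]
  exact integral_congr_ae (Eventually.of_forall fun u => indicator_split f u)

end COV

lemma pk_meas2 (β τ : ℝ) : Measurable fun q : ℝ × ℝ => pk β τ q.1 q.2 := by
  unfold pk
  apply Measurable.add
  · exact (gk_continuous τ).measurable.comp (measurable_fst.sub measurable_snd)
  · exact ((measurable_realSign.comp measurable_snd).const_mul β).mul
      ((gk_continuous τ).measurable.comp
        ((measurable_abs.comp measurable_fst).add (measurable_abs.comp measurable_snd)))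

lemma fubini_step {β : ℝ} (hβ : |β| ≤ 1) {t1 t2 : ℝ} (h1 : 0 < t1) (h2 : 0 < t2) (X₀ : ℝ)
    {Φ : ℝ → ℝ} (hΦm : Measurable Φ) {M : ℝ} (hM : 0 ≤ M) (hΦb : ∀ u, |Φ u| ≤ M) :
    (Integrable (fun Z => (∫ Y, Φ Y * pk β t2 Z Y) * pk β t1 X₀ Z)) ∧
    ∫ Z, (∫ Y, Φ Y * pk β t2 Z Y) * pk β t1 X₀ Z = ∫ Y, Φ Y * pk β (t1 + t2) X₀ Y := by
  have hmeas2 : Measurable (fun q : ℝ × ℝ => Φ q.2 * pk β t2 q.1 q.2 * pk β t1 X₀ q.1) :=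
    ((hΦm.comp measurable_snd).mul (pk_meas2 β t2)).mul
      ((pk_meas_right β t1 X₀).comp measurable_fst)
  have hslice : ∀ Z : ℝ, Integrable (fun Y => Φ Y * pk β t2 Z Y) := fun Z =>
    (pk_integrable hβ h2 Z).bdd_mul hΦm.aestronglyMeasurable
      (c := M) (Eventually.of_forall fun Y => by rw [Real.norm_eq_abs]; exact hΦb Y)
  have habs : ∀ Z : ℝ, ∫ Y, |Φ Y * pk β t2 Z Y| ≤ 2 * M := by
    intro Z
    calc ∫ Y, |Φ Y * pk β t2 Z Y| ≤ ∫ Y, M * |pk β t2 Z Y| := by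
          apply integral_mono (hslice Z).abs ((pk_integrable hβ h2 Z).abs.const_mul M)
          intro Y
          dsimp only
          rw [abs_mul]
          exact mul_le_mul_of_nonneg_right (hΦb Y) (abs_nonneg _)
      _ = M * ∫ Y, |pk β t2 Z Y| := integral_const_mul M _
      _ ≤ M * 2 := mul_le_mul_of_nonneg_left (integral_abs_pk_le hβ h2 Z) hM
      _ = 2 * M := by ring
  have hprod : Integrable (fun q : ℝ × ℝ => Φ q.2 * pk β t2 q.1 q.2 * pk β t1 X₀ q.1)
      (volume.prod volume) := by
    rw [integrable_prod_iff hmeas2.aestronglyMeasurable]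
    constructor
    · exact Eventually.of_forall fun Z => by
        simpa using (hslice Z).mul_const (pk β t1 X₀ Z)
    · apply Integrable.mono'
        (g := fun Z => (2 * M) * (2 * gk t1 (X₀ - Z)))
        (((gk_integrable_sub' h1 X₀).const_mul 2).const_mul (2 * M))
      · exact (hmeas2.norm.aestronglyMeasurable).integral_prod_right'
      · apply Eventually.of_forall
        intro Z
        rw [Real.norm_eq_abs, abs_of_nonneg (integral_nonneg fun Y => norm_nonneg _)]
        have step : ∀ Y : ℝ, ‖Φ Y * pk β t2 Z Y * pk β t1 X₀ Z‖
            = |Φ Y * pk β t2 Z Y| * |pk β t1 X₀ Z| := fun Y => by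
          rw [Real.norm_eq_abs, abs_mul]
        simp_rw [step]
        rw [integral_mul_const]
        exact mul_le_mul (habs Z) (pk_abs_le hβ h1 X₀ Z) (abs_nonneg _) (by positivity)
  have hrepr : (fun Z => (∫ Y, Φ Y * pk β t2 Z Y) * pk β t1 X₀ Z)
      = fun Z => ∫ Y, Φ Y * pk β t2 Z Y * pk β t1 X₀ Z := by
    funext Z
    rw [integral_mul_const]
  constructor
  · rw [hrepr]
    exact hprod.integral_prod_left
  · rw [hrepr]
    rw [integral_integral_swap (f := fun Z Y => Φ Y * pk β t2 Z Y * pk β t1 X₀ Z) hprod]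
    have inner : ∀ Y : ℝ, (∫ Z, Φ Y * pk β t2 Z Y * pk β t1 X₀ Z)
        = Φ Y * pk β (t1 + t2) X₀ Y := by
      intro Y
      have e : (fun Z => Φ Y * pk β t2 Z Y * pk β t1 X₀ Z)
          = fun Z => Φ Y * (pk β t1 X₀ Z * pk β t2 Z Y) := by
        funext Z; ring
      rw [e, integral_const_mul, pk_CK hβ h1 h2 X₀ Y]
    simp_rw [inner]

section Bridge
variable {σlo σhi c : ℝ}

lemma sigmaStep_eq : sigmaStep σlo σhi c = sigmaStep' σlo σhi c := rfl

lemma realSign_div {a b : ℝ} (hb : 0 < b) : Real.sign (a / b) = Real.sign a := by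
  rcases lt_trichotomy a 0 with h | h | h
  · rw [Real.sign_of_neg h, Real.sign_of_neg (div_neg_of_neg_of_pos h hb)]
  · simp [h]
  · rw [Real.sign_of_pos h, Real.sign_of_pos (div_pos h hb)]

lemma beta_abs_le (hσlo : 0 < σlo) (hσ : σlo ≤ σhi) : |(σhi - σlo) / (σhi + σlo)| ≤ 1 := by
  rw [abs_div, abs_of_nonneg (by linarith), abs_of_pos (by linarith)]
  rw [div_le_one (by linarith)]
  linarith

lemma transDensity_pk (hσlo : 0 < σlo) (hσ : σlo ≤ σhi) {t s : ℝ} (hts : t < s) (x y : ℝ) :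
    transDensity σlo σhi c t x s y =
      pk ((σhi - σlo) / (σhi + σlo)) (s - t) (Tmap σlo σhi c x) (Tmap σlo σhi c y)
        / sigmaStep σlo σhi c y := by
  have hy := sigmaStep'_pos (c := c) hσlo hσ y
  have h2π : (0:ℝ) < 2 * Real.pi * (s - t) := two_pi_tau_pos (by linarith)
  have hsq : Real.sqrt (2 * Real.pi * (s - t)) ≠ 0 := ne_of_gt (Real.sqrt_pos.2 h2π)
  unfold transDensity pk gk Tmap
  rw [sigmaStep_eq, realSign_div hy]
  ring

end Bridge

section Loss
variable {σlo σhi c : ℝ} {φ₁ : ℝ → ℝ}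

lemma lossUtility_meas (hσlo : 0 < σlo) (hσ : σlo ≤ σhi) (hφ₁ : Cb3 φ₁) :
    Measurable (lossUtility σlo σhi c φ₁) := by
  have hhi : 0 < σhi := lt_of_lt_of_le hσlo hσ
  have hψ : Continuous (fun u : ℝ => φ₁ (max u 0)) := by
    apply (hφ₁.1.continuousOn).comp_continuous (continuous_id.max continuous_const)
    intro x
    exact Set.mem_Ici.2 (le_max_right _ _)
  have heq : lossUtility σlo σhi c φ₁ = fun x =>
      if c ≤ x then (fun u => φ₁ (max u 0)) (x - c)
      else -(σhi / σlo) * (fun u => φ₁ (max u 0)) (-(σlo / σhi) * (x - c)) := by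
    funext x
    unfold lossUtility
    by_cases hx : c ≤ x
    · rw [if_pos hx, if_pos hx]
      simp only
      rw [max_eq_left (by linarith)]
    · rw [if_neg hx, if_neg hx]
      push_neg at hx
      simp only
      rw [max_eq_left (by nlinarith [div_nonneg hσlo.le hhi.le] : 0 ≤ -(σlo / σhi) * (x - c))]
  rw [heq]
  exact Measurable.ite measurableSet_Ici
    (hψ.measurable.comp (measurable_id.sub measurable_const))
    ((hψ.measurable.comp ((measurable_id.sub measurable_const).const_mul _)).const_mul _)

lemma lossUtility_bound (hσlo : 0 < σlo) (hσ : σlo ≤ σhi) (hφ₁ : Cb3 φ₁) :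
    ∃ M : ℝ, 0 ≤ M ∧ ∀ x, |lossUtility σlo σhi c φ₁ x| ≤ M := by
  have hhi : 0 < σhi := lt_of_lt_of_le hσlo hσ
  obtain ⟨C, hC⟩ := hφ₁.2 0 (by norm_num)
  simp only [iteratedDerivWithin_zero] at hC
  have hC0 : 0 ≤ C := le_trans (abs_nonneg _) (hC 0 (Set.mem_Ici.2 le_rfl))
  refine ⟨(1 + σhi / σlo) * C, by positivity, ?_⟩
  intro x
  unfold lossUtility
  by_cases hx : c ≤ x
  · rw [if_pos hx]
    have := hC (x - c) (Set.mem_Ici.2 (by linarith))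
    nlinarith [div_nonneg hhi.le hσlo.le]
  · rw [if_neg hx]
    push_neg at hx
    have harg : (0:ℝ) ≤ -(σlo / σhi) * (x - c) := by
      nlinarith [div_nonneg hσlo.le hhi.le]
    have := hC (-(σlo / σhi) * (x - c)) (Set.mem_Ici.2 harg)
    rw [abs_mul, abs_neg, abs_of_nonneg (div_nonneg hhi.le hσlo.le)]
    nlinarith [div_nonneg hhi.le hσlo.le, abs_nonneg (φ₁ (-(σlo / σhi) * (x - c)))]

lemma Smap_meas : Measurable (Smap σlo σhi c) := by
  unfold Smap
  apply Measurable.const_add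
  exact (Measurable.ite measurableSet_Ici measurable_const measurable_const).mul measurable_id

/-- Core representation: `H`-type integrals in skew coordinates. -/
lemma H_repr (hσlo : 0 < σlo) (hσ : σlo ≤ σhi) (hφ₁ : Cb3 φ₁) {t s : ℝ} (hts : t < s)
    (x : ℝ) :
    ∫ y, lossUtility σlo σhi c φ₁ y * transDensity σlo σhi c t x s y =
      ∫ Y, lossUtility σlo σhi c φ₁ (Smap σlo σhi c Y) *
        pk ((σhi - σlo) / (σhi + σlo)) (s - t) (Tmap σlo σhi c x) Y := by
  set β := (σhi - σlo) / (σhi + σlo) with hβdef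
  set Φ := fun u => lossUtility σlo σhi c φ₁ (Smap σlo σhi c u) with hΦdef
  obtain ⟨M, hM0, hMb⟩ := lossUtility_bound (c := c) hσlo hσ hφ₁
  have hβ : |β| ≤ 1 := beta_abs_le hσlo hσ
  have hint : Integrable (fun Y => Φ Y * pk β (s - t) (Tmap σlo σhi c x) Y) :=
    (pk_integrable hβ (by linarith) _).bdd_mul
      ((lossUtility_meas hσlo hσ hφ₁).comp Smap_meas).aestronglyMeasurable
      (c := M) (Eventually.of_forall fun Y => by rw [Real.norm_eq_abs]; exact hMb _)
  have hpt : ∀ y, lossUtility σlo σhi c φ₁ y * transDensity σlo σhi c t x s y =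
      (fun Y => Φ Y * pk β (s - t) (Tmap σlo σhi c x) Y) (Tmap σlo σhi c y)
        / sigmaStep' σlo σhi c y := by
    intro y
    simp only [hΦdef]
    rw [Smap_Tmap hσlo hσ, transDensity_pk hσlo hσ hts, sigmaStep_eq, mul_div_assoc]
  simp_rw [hpt]
  exact cov_integral hσlo hσ hint

end Loss


/-- **Lemma (semigroup property of `H_t`).** For every `t ∈ [0, 1+h)` and
`r ∈ (0, 1+h−t]`, `H_t(x) = ∫ H_{t+r}(z)·q^c(t, x; t+r, z) dz` for all `x`. -/
theorem Hfun_semigroup (σlo σhi c : ℝ) (hσlo : 0 < σlo) (hσ : σlo ≤ σhi)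
    (h : ℝ) (hh : 0 < h) (φ₁ : ℝ → ℝ) (hφ₁0 : φ₁ 0 = 0) (hφ₁ : Cb3 φ₁) :
    ∀ t : ℝ, 0 ≤ t → t < 1 + h →
      ∀ r : ℝ, 0 < r → r ≤ 1 + h - t →
        ∀ x : ℝ, Hfun σlo σhi c φ₁ h t x =
          ∫ z, Hfun σlo σhi c φ₁ h (t + r) z * transDensity σlo σhi c t x (t + r) z := by
  intro t ht0 ht1 r hr0 hr1 x
  by_cases hcase : t + r < 1 + h
  · set β := (σhi - σlo) / (σhi + σlo) with hβdef
    set Φ := fun u => lossUtility σlo σhi c φ₁ (Smap σlo σhi c u) with hΦdef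
    set X₀ := Tmap σlo σhi c x with hX₀def
    have hβ : |β| ≤ 1 := beta_abs_le hσlo hσ
    obtain ⟨M, hM0, hMb⟩ := lossUtility_bound (c := c) hσlo hσ hφ₁
    have h2 : 0 < 1 + h - (t + r) := by linarith
    have hL : Hfun σlo σhi c φ₁ h t x = ∫ Y, Φ Y * pk β ((1 + h) - t) X₀ Y := by
      unfold Hfun
      rw [if_pos ht1]
      exact H_repr hσlo hσ hφ₁ ht1 x
    have hΦm : Measurable Φ := (lossUtility_meas hσlo hσ hφ₁).comp Smap_meas
    have hfub := fubini_step hβ hr0 h2 X₀ (Φ := Φ) hΦm hM0 (fun u => hMb _)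
    have hRpt : ∀ z, Hfun σlo σhi c φ₁ h (t + r) z * transDensity σlo σhi c t x (t + r) z =
        (fun Z => (∫ Y, Φ Y * pk β ((1 + h) - (t + r)) Z Y) * pk β r X₀ Z)
          (Tmap σlo σhi c z) / sigmaStep' σlo σhi c z := by
      intro z
      unfold Hfun
      rw [if_pos hcase, H_repr hσlo hσ hφ₁ hcase z,
        transDensity_pk hσlo hσ (by linarith : t < t + r), sigmaStep_eq,
        show t + r - t = r by ring]
      simp only
      ring
    calc Hfun σlo σhi c φ₁ h t x
        = ∫ Y, Φ Y * pk β ((1 + h) - t) X₀ Y := hL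
      _ = ∫ Y, Φ Y * pk β (r + ((1 + h) - (t + r))) X₀ Y := by
          rw [show (1 + h) - t = r + ((1 + h) - (t + r)) by ring]
      _ = ∫ Z, (∫ Y, Φ Y * pk β ((1 + h) - (t + r)) Z Y) * pk β r X₀ Z := (hfub.2).symm
      _ = ∫ z, (fun Z => (∫ Y, Φ Y * pk β ((1 + h) - (t + r)) Z Y) * pk β r X₀ Z)
            (Tmap σlo σhi c z) / sigmaStep' σlo σhi c z :=
          (cov_integral hσlo hσ hfub.1).symm
      _ = ∫ z, Hfun σlo σhi c φ₁ h (t + r) z * transDensity σlo σhi c t x (t + r) z :=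
          integral_congr_ae (Eventually.of_forall fun z => (hRpt z).symm)
  · have htr : t + r = 1 + h := le_antisymm (by linarith) (not_lt.1 hcase)
    rw [htr]
    simp only [Hfun, if_pos ht1, if_neg (lt_irrefl (1 + h))]


end LAB
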